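/- Let G be a finite group, M a monoid functor for G, and H ≤ G. For (K,s) ∈ R(H,M) and L ≤ H, set y_L^{(K,s)} = Σ_{hN_H(K,s) ∈ N_H(K)/N_H(K,s)} {}^{rh}s if L = ʳK for some r ∈ H, and y_L^{(K,s)} = 0 otherwise. Then: (i) the elements (y_L^{(K,s)})_{L≤H} for (K,s) ∈ R(H,M) form a free Z-basis of ℧(H,M), so the additive map κ_H : Ω̃(H,M) → ℧(H,M) sending the standard basis vector at (K,s) to (y_L^{(K,s)})_{L≤H} is an isomorphism; (ii) κ_H ∘ φ_H = ρ_H, where ρ_H is the mark homomorphism; (iii) φ_H and ρ_H are injective. -/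

import Mathlib

set_option linter.unusedSectionVars false
set_option linter.unusedVariables false

open scoped Classical

namespace LB
noncomputable section

variable {G : Type*} [Group G]

def conjS (g : G) (K : Subgroup G) : Subgroup G :=
  K.map ((MulAut.conj g).toMonoidHom)

theorem mem_conjS {g x : G} {K : Subgroup G} : x ∈ conjS g K ↔ g⁻¹ * x * g ∈ K := by
  unfold conjS
  rw [Subgroup.mem_map]
  constructor
  · rintro ⟨y, hy, rfl⟩
    have h2 : g⁻¹ * ((MulAut.conj g).toMonoidHom y) * g = y := by
      simp only [MulEquiv.coe_toMonoidHom, MulAut.conj_apply]; group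
    rw [h2]; exact hy
  · intro h
    refine ⟨g⁻¹ * x * g, h, ?_⟩
    simp only [MulEquiv.coe_toMonoidHom, MulAut.conj_apply]; group

theorem conjS_mono (g : G) {K K' : Subgroup G} (h : K ≤ K') : conjS g K ≤ conjS g K' :=
  Subgroup.map_mono h


/-- The Möbius function of a finite partial order. -/
noncomputable def mob {α : Type*} [PartialOrder α] [Finite α] (a b : α) : ℤ :=
  letI : Fintype α := Fintype.ofFinite α
  letI : @DecidableRel α α (· < ·) := Classical.decRel _
  letI : LocallyFiniteOrder α := Fintype.toLocallyFiniteOrder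
  IncidenceAlgebra.mu ℤ a b

/-- A monoid functor for `G` (Definition 2.2 of the paper). -/
structure MonoidFunctor (G : Type*) [Group G] where
  M : Subgroup G → Type*
  instM : ∀ K, Monoid (M K)
  con : ∀ (g : G) (K : Subgroup G), M K →* M (conjS g K)
  res : ∀ {K H : Subgroup G}, K ≤ H → (M H →* M K)
  con_mul : ∀ (g r : G) (K : Subgroup G) (s : M K),
    (⟨conjS g (conjS r K), con g (conjS r K) (con r K s)⟩ : Σ K : Subgroup G, M K)
      = ⟨conjS (g * r) K, con (g * r) K s⟩
  con_id : ∀ (K : Subgroup G) (h : G), h ∈ K → ∀ s : M K,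
    (⟨conjS h K, con h K s⟩ : Σ K : Subgroup G, M K) = ⟨K, s⟩
  res_res : ∀ {L K H : Subgroup G} (hLK : L ≤ K) (hKH : K ≤ H) (s : M H),
    res hLK (res hKH s) = res (hLK.trans hKH) s
  res_self : ∀ (H : Subgroup G) (s : M H), res le_rfl s = s
  con_res : ∀ (g : G) {K H : Subgroup G} (hKH : K ≤ H) (s : M H),
    con g K (res hKH s) = res (conjS_mono g hKH) (con g H s)

attribute [instance] MonoidFunctor.instM

variable (Mf : MonoidFunctor G)

/-- The disjoint union of the monoids `M K`. -/
abbrev Sig (Mf : MonoidFunctor G) := Σ K : Subgroup G, Mf.M K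

/-- The conjugation action on pairs `(K, s)`. -/
def dot (g : G) (x : Sig Mf) : Sig Mf := ⟨conjS g x.1, Mf.con g x.1 x.2⟩

theorem dot_one (x : Sig Mf) : dot Mf 1 x = x := Mf.con_id x.1 1 (one_mem _) x.2

theorem dot_mul (g r : G) (x : Sig Mf) : dot Mf g (dot Mf r x) = dot Mf (g * r) x :=
  Mf.con_mul g r x.1 x.2

/-- `N_H(K,s)`, the stabilizer in `H` of the pair `(K,s)`. -/
def NGpair (H : Subgroup G) (x : Sig Mf) : Subgroup G where
  carrier := {g | g ∈ H ∧ dot Mf g x = x}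
  one_mem' := ⟨H.one_mem, dot_one Mf x⟩
  mul_mem' := by
    rintro a b ⟨ha, da⟩ ⟨hb, db⟩
    exact ⟨H.mul_mem ha hb, by rw [← dot_mul, db, da]⟩
  inv_mem' := by
    rintro a ⟨ha, da⟩
    refine ⟨H.inv_mem ha, ?_⟩
    conv_lhs => rw [← da]
    rw [dot_mul, inv_mul_cancel, dot_one]

/-- A complete set of representatives `R(H,M)` of the `H`-orbits of the set `S(H,M)` of
pairs `(K,s)` with `K ≤ H` and `s ∈ M(K)`. -/
structure Reps (Mf : MonoidFunctor G) (H : Subgroup G) where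
  R : Set (Sig Mf)
  subset : ∀ x ∈ R, x.1 ≤ H
  complete : ∀ x : Sig Mf, x.1 ≤ H → ∃! y, y ∈ R ∧ ∃ h ∈ H, dot Mf h x = y

variable {H : Subgroup G}

/-- The coordinate of a tuple indexed by `R(H,M)` at (the orbit of) an arbitrary pair. -/
def coordAt {A : Type*} [AddCommMonoid A] (R : Reps Mf H) (v : ↥R.R → A) (y : Sig Mf) : A :=
  ∑ᶠ (k : ↥R.R) (_ : ∃ h ∈ H, dot Mf h y = ↑k), v k

/-- The number of cosets `hK ∈ H/K` with `U ≤ ʰK` and `t = res(ʰs)`,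
for `x = (K,s)` and `u = (U,t)`. -/
def invCount (H : Subgroup G) (x u : Sig Mf) : ℕ :=
  Nat.card {q : ↥H ⧸ x.1.subgroupOf H //
    ∃ h : ↥H, QuotientGroup.mk h = q ∧
      ∃ hle : u.1 ≤ conjS (h : G) x.1, u.2 = Mf.res hle (Mf.con (h : G) x.1 x.2)}

/-- The mark morphism `φ_H` in coordinates. -/
def phiM (R : Reps Mf H) (f : ↥R.R → ℤ) : ↥R.R → ℤ :=
  fun u => ∑ᶠ k : ↥R.R, f k * (invCount Mf H k.1 u.1 : ℤ)

/-- `|W_H(K,s)| = |N_H(K,s)/K|`. -/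
def WCard (H : Subgroup G) (x : Sig Mf) : ℕ := (x.1.subgroupOf (NGpair Mf H x)).index

/-- The order of a Sylow `p`-subgroup of a group of order `n`; for `p = 0`
(representing `p = ∞`) it is `n` itself. -/
def sylCard (p n : ℕ) : ℕ := if p = 0 then n else p ^ (n.factorization p)

/-- The multiplicative set `ℤ ∖ (p)` (for `p` prime), resp. the units of `ℤ` (for `p = 0`,
representing `p = ∞`), so that `Localization (locMon p hp)` is `ℤ_(p)`, resp. `ℤ`. -/
def locMon (p : ℕ) (hp : p = 0 ∨ p.Prime) : Submonoid ℤ where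
  carrier := {k | if p = 0 then IsUnit k else ¬ (p : ℤ) ∣ k}
  one_mem' := by
    rcases hp with h | h
    · simp [h]
    · simp only [Set.mem_setOf_eq, if_neg h.ne_zero]
      intro hd
      exact h.one_lt.ne' (by exact_mod_cast Int.eq_one_of_dvd_one (by positivity) hd)
  mul_mem' := by
    intro a b ha hb
    rcases hp with h | h
    · simp only [Set.mem_setOf_eq, if_pos h] at *
      exact ha.mul hb
    · simp only [Set.mem_setOf_eq, if_neg h.ne_zero] at *
      intro hd
      rcases ((Nat.prime_iff_prime_int.mp h).dvd_mul.mp hd) with h1 | h1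
      · exact ha h1
      · exact hb h1

/-- `ℤ_(p)` (with `ℤ_(0)` interpreted as `ℤ_(∞) = ℤ`). -/
abbrev Zp (p : ℕ) (hp : p = 0 ∨ p.Prime) := Localization (locMon p hp)
theorem conjS_le {g : G} {K H : Subgroup G} (hK : K ≤ H) (hg : g ∈ H) : conjS g K ≤ H := by
  intro x hx
  rw [mem_conjS] at hx
  have h2 := H.mul_mem (H.mul_mem hg (hK hx)) (H.inv_mem hg)
  convert h2 using 1
  group

/-- The ambient product `∏_{U ≤ H} ℤM(U)` of the monoid rings `ℤM(U)`. -/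
abbrev MhoAmbient (Mf : MonoidFunctor G) (H : Subgroup G) :=
  ∀ U : {U : Subgroup G // U ≤ H}, MonoidAlgebra ℤ (Mf.M U.1)

/-- `℧(H,M)`: the tuples `(x_U)_{U ≤ H}` with `con_U^h(x_U) = x_{ʰU}` for all
`h ∈ H`. -/
def Mho (Mf : MonoidFunctor G) (H : Subgroup G) : Set (MhoAmbient Mf H) :=
  {x | ∀ (U : {U : Subgroup G // U ≤ H}) (h : G) (hh : h ∈ H),
    Finsupp.mapDomain (Mf.con h U.1) (x U).coeff = (x ⟨conjS h U.1, conjS_le U.2 hh⟩).coeff}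

/-- The element `(y_L^{(K,s)})_{L ≤ H}` of `℧(H,M)`: its `L`-component is the sum of
the distinct elements `ʳs ∈ M(L)` over `r ∈ H` with `ʳK = L` (equivalently, the sum
over `hN_H(K,s) ∈ N_H(K)/N_H(K,s)` of `ʳʰs` when `L = ʳK`), and `0` if `L` is not
an `H`-conjugate of `K`. -/
def yVec (R : Reps Mf H) (k : ↥R.R) : MhoAmbient Mf H :=
  fun U => ∑ᶠ (t : Mf.M U.1) (_ : ∃ r ∈ H, dot Mf r k.1 = ⟨U.1, t⟩),
    MonoidAlgebra.single t 1

/-- The mark homomorphism `ρ_H : Ω(H,M) → ℧(H,M)`,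
`[(H/K)_s] ↦ (Σ_{hK ∈ H/K, U ≤ ʰK} res_U^{ʰK}(ʰs))_{U ≤ H}`. -/
def rhoM (R : Reps Mf H) (f : ↥R.R → ℤ) : MhoAmbient Mf H :=
  fun U => ∑ᶠ k : ↥R.R, f k •
    ∑ᶠ q : ↥H ⧸ k.1.1.subgroupOf H,
      ∑ᶠ hle : U.1 ≤ conjS ((Quotient.out q : ↥H) : G) k.1.1,
        MonoidAlgebra.single
          (Mf.res hle (Mf.con ((Quotient.out q : ↥H) : G) k.1.1 k.1.2)) 1

/-- The additive map `κ_H : Ω̃(H,M) → ℧(H,M)` sending the standard basis vector at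
`(K,s)` to `(y_L^{(K,s)})_{L ≤ H}`. -/
def kappaM (R : Reps Mf H) (x : ↥R.R → ℤ) : MhoAmbient Mf H :=
  ∑ᶠ k : ↥R.R, x k • yVec Mf R k

/- ===== auxiliary lemmas ===== -/

theorem conjS_conjS (g r : G) (K : Subgroup G) : conjS g (conjS r K) = conjS (g * r) K := by
  ext x
  simp only [mem_conjS, mul_inv_rev, mul_assoc]

theorem conjS_one (K : Subgroup G) : conjS 1 K = K := by
  ext x; simp [mem_conjS]

theorem dot_injective (g : G) : Function.Injective (dot Mf g) := fun a b h => by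
  have h2 := congrArg (dot Mf g⁻¹) h
  rwa [dot_mul, dot_mul, inv_mul_cancel, dot_one, dot_one] at h2

theorem sig_snd_eq {K : Subgroup G} {a b : Mf.M K} (h : (⟨K, a⟩ : Sig Mf) = ⟨K, b⟩) : a = b := by
  exact eq_of_heq (Sigma.ext_iff.mp h).2

theorem con_injective (g : G) (K : Subgroup G) : Function.Injective (Mf.con g K) := by
  intro a b h
  have h2 : dot Mf g ⟨K, a⟩ = dot Mf g ⟨K, b⟩ := by
    show (⟨conjS g K, Mf.con g K a⟩ : Sig Mf) = ⟨conjS g K, Mf.con g K b⟩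
    rw [h]
  exact sig_snd_eq Mf (dot_injective Mf g h2)

theorem sig_cast {x : Sig Mf} {K : Subgroup G} (h : x.1 = K) : x = ⟨K, h ▸ x.2⟩ := by
  cases x; cases h; rfl

theorem con_surjective (g : G) (K : Subgroup G) : Function.Surjective (Mf.con g K) := by
  intro t
  have hy : dot Mf g (dot Mf g⁻¹ ⟨conjS g K, t⟩) = ⟨conjS g K, t⟩ := by
    rw [dot_mul, mul_inv_cancel, dot_one]
  have e2 : (dot Mf g⁻¹ (⟨conjS g K, t⟩ : Sig Mf)).1 = K := by
    show conjS g⁻¹ (conjS g K) = K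
    rw [conjS_conjS, inv_mul_cancel, conjS_one]
  rw [sig_cast Mf e2] at hy
  refine ⟨e2 ▸ (dot Mf g⁻¹ (⟨conjS g K, t⟩ : Sig Mf)).2, ?_⟩
  exact sig_snd_eq Mf hy

/-- The `H`-orbit relation on `Sig Mf`. -/
def orb (H : Subgroup G) (x y : Sig Mf) : Prop := ∃ h ∈ H, dot Mf h x = y

theorem orb_refl (x : Sig Mf) : orb Mf H x x := ⟨1, one_mem H, dot_one Mf x⟩

theorem orb_symm {x y : Sig Mf} (h : orb Mf H x y) : orb Mf H y x := by
  obtain ⟨g, hg, rfl⟩ := h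
  exact ⟨g⁻¹, inv_mem hg, by rw [dot_mul, inv_mul_cancel, dot_one]⟩

theorem orb_trans {x y z : Sig Mf} (h1 : orb Mf H x y) (h2 : orb Mf H y z) : orb Mf H x z := by
  obtain ⟨g, hg, rfl⟩ := h1; obtain ⟨g', hg', rfl⟩ := h2
  exact ⟨g' * g, mul_mem hg' hg, (dot_mul Mf g' g x).symm⟩

theorem rep_unique {R : Reps Mf H} {k k' : ↥R.R} (h : orb Mf H k.1 k'.1) : k = k' := by
  obtain ⟨y, hy, hu⟩ := R.complete k.1 (R.subset k.1 k.2)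
  have h1 := hu k'.1 ⟨k'.2, h⟩
  have h2 := hu k.1 ⟨k.2, orb_refl Mf k.1⟩
  exact Subtype.ext (h2.trans h1.symm)

/-- The representative in `R` of the orbit of `x`. -/
def repOf (R : Reps Mf H) (x : Sig Mf) (hx : x.1 ≤ H) : ↥R.R :=
  ⟨(R.complete x hx).exists.choose, (R.complete x hx).exists.choose_spec.1⟩

theorem repOf_orb (R : Reps Mf H) (x : Sig Mf) (hx : x.1 ≤ H) : orb Mf H x (repOf Mf R x hx).1 :=
  (R.complete x hx).exists.choose_spec.2

theorem eq_repOf {R : Reps Mf H} {x : Sig Mf} (hx : x.1 ≤ H) {k : ↥R.R} (h : orb Mf H x k.1) :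
    k = repOf Mf R x hx := by
  obtain ⟨y, hy, hu⟩ := R.complete x hx
  exact Subtype.ext ((hu k.1 ⟨k.2, h⟩).trans
    (hu _ ⟨(repOf Mf R x hx).2, repOf_orb Mf R x hx⟩).symm)

theorem repOf_self (R : Reps Mf H) (k : ↥R.R) :
    repOf Mf R k.1 (R.subset k.1 k.2) = k :=
  (eq_repOf Mf _ (orb_refl Mf k.1)).symm

theorem repOf_dot {R : Reps Mf H} {z : Sig Mf} {h : G} (hh : h ∈ H) (hz : z.1 ≤ H)
    (hz2 : (dot Mf h z).1 ≤ H) : repOf Mf R (dot Mf h z) hz2 = repOf Mf R z hz :=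
  (eq_repOf Mf _ (orb_trans Mf (orb_symm Mf ⟨h, hh, rfl⟩) (repOf_orb Mf R z hz))).symm

theorem finite_sig [Finite G] (hMf : ∀ K : Subgroup G, Finite (Mf.M K)) : Finite (Sig Mf) := by
  haveI : Finite (Subgroup G) := Finite.of_injective (fun K => (K : Set G)) SetLike.coe_injective
  haveI : ∀ K : Subgroup G, Finite (Mf.M K) := hMf
  infer_instance

theorem yVec_apply (hMf : ∀ K : Subgroup G, Finite (Mf.M K)) (R : Reps Mf H) (k : ↥R.R)
    (U : {U : Subgroup G // U ≤ H}) (t : Mf.M U.1) :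
    (yVec Mf R k U).coeff t = if orb Mf H k.1 ⟨U.1, t⟩ then 1 else 0 := by
  haveI := hMf U.1
  haveI : Fintype (Mf.M U.1) := Fintype.ofFinite _
  show (∑ᶠ (t' : Mf.M U.1) (_ : ∃ r ∈ H, dot Mf r k.1 = ⟨U.1, t'⟩),
      MonoidAlgebra.single t' (1 : ℤ)).coeff t = _
  rw [finsum_cond_eq_sum_of_cond_iff (fun t' => MonoidAlgebra.single t' (1 : ℤ))
      (t := Finset.univ.filter (fun t' => orb Mf H k.1 ⟨U.1, t'⟩))
      (fun {x} _ => by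
        rw [Finset.mem_filter]; exact ⟨fun h => ⟨Finset.mem_univ _, h⟩, fun h => h.2⟩)]
  rw [MonoidAlgebra.coeff_sum, Finset.sum_apply']
  simp only [MonoidAlgebra.coeff_single, Finsupp.single_apply]
  rw [Finset.sum_ite_eq' (Finset.univ.filter (fun t' => orb Mf H k.1 ⟨U.1, t'⟩)) t
    (fun _ => (1 : ℤ))]
  simp

theorem kappa_apply [Finite G] (hMf : ∀ K : Subgroup G, Finite (Mf.M K)) (R : Reps Mf H)
    (x : ↥R.R → ℤ) (U : {U : Subgroup G // U ≤ H}) (t : Mf.M U.1) :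
    (kappaM Mf R x U).coeff t = x (repOf Mf R ⟨U.1, t⟩ U.2) := by
  haveI := finite_sig Mf hMf
  haveI : Fintype ↥R.R := Fintype.ofFinite _
  have h1 : (kappaM Mf R x U).coeff t = ∑ k : ↥R.R, x k * (yVec Mf R k U).coeff t := by
    rw [show kappaM Mf R x = ∑ᶠ k : ↥R.R, x k • yVec Mf R k from rfl,
      finsum_eq_sum_of_fintype, Finset.sum_apply, MonoidAlgebra.coeff_sum, Finset.sum_apply']
    refine Finset.sum_congr rfl fun k _ => ?_
    rw [Pi.smul_apply, MonoidAlgebra.coeff_smul, Finsupp.smul_apply, smul_eq_mul]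
  rw [h1]
  have h2 : ∀ k : ↥R.R, x k * (yVec Mf R k U).coeff t
      = if k = repOf Mf R ⟨U.1, t⟩ U.2 then x k else 0 := by
    intro k
    rw [yVec_apply Mf hMf R k U t]
    by_cases hk : k = repOf Mf R ⟨U.1, t⟩ U.2
    · subst hk
      rw [if_pos rfl, if_pos (orb_symm Mf (repOf_orb Mf R ⟨U.1, t⟩ U.2)), mul_one]
    · rw [if_neg hk, if_neg, mul_zero]
      intro ho
      exact hk (eq_repOf Mf U.2 (orb_symm Mf ho))
  simp only [h2]
  rw [Finset.sum_ite_eq' Finset.univ (repOf Mf R ⟨U.1, t⟩ U.2) x]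
  simp

theorem kappa_inj [Finite G] (hMf : ∀ K : Subgroup G, Finite (Mf.M K)) (R : Reps Mf H) :
    Function.Injective (kappaM Mf R) := by
  intro x y hxy
  funext k
  have h : (kappaM Mf R x ⟨k.1.1, R.subset k.1 k.2⟩).coeff k.1.2
      = (kappaM Mf R y ⟨k.1.1, R.subset k.1 k.2⟩).coeff k.1.2 :=
    congrArg (fun v : MonoidAlgebra ℤ (Mf.M k.1.1) => v.coeff k.1.2)
      (congrFun hxy ⟨k.1.1, R.subset k.1 k.2⟩)
  rw [kappa_apply Mf hMf R x ⟨k.1.1, R.subset k.1 k.2⟩ k.1.2,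
    kappa_apply Mf hMf R y ⟨k.1.1, R.subset k.1 k.2⟩ k.1.2] at h
  rwa [repOf_self Mf R k] at h

theorem mho_coeff {x : MhoAmbient Mf H} (hx : x ∈ Mho Mf H) (U : {U : Subgroup G // U ≤ H})
    {h : G} (hh : h ∈ H) (t : Mf.M U.1) :
    (x ⟨conjS h U.1, conjS_le U.2 hh⟩).coeff (Mf.con h U.1 t) = (x U).coeff t := by
  rw [← hx U h hh, Finsupp.mapDomain_apply (con_injective Mf h U.1)]

theorem mho_coeff_orb {x : MhoAmbient Mf H} (hx : x ∈ Mho Mf H) {z y : Sig Mf} {r : G}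
    (hr : r ∈ H) (hzy : dot Mf r z = y) (hz : z.1 ≤ H) (hy : y.1 ≤ H) :
    (x ⟨y.1, hy⟩).coeff y.2 = (x ⟨z.1, hz⟩).coeff z.2 := by
  subst hzy
  exact mho_coeff Mf hx ⟨z.1, hz⟩ hr z.2

theorem kappa_mem_mho [Finite G] (hMf : ∀ K : Subgroup G, Finite (Mf.M K)) (R : Reps Mf H)
    (x : ↥R.R → ℤ) : kappaM Mf R x ∈ Mho Mf H := by
  intro U h hh
  apply Finsupp.ext
  intro b
  obtain ⟨a, rfl⟩ := con_surjective Mf h U.1 b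
  rw [Finsupp.mapDomain_apply (con_injective Mf h U.1)]
  rw [kappa_apply Mf hMf R x U a,
    kappa_apply Mf hMf R x ⟨conjS h U.1, conjS_le U.2 hh⟩ (Mf.con h U.1 a)]
  congr 1
  exact (repOf_dot Mf (z := ⟨U.1, a⟩) hh U.2 (conjS_le U.2 hh)).symm

/-- `℧(H,M)` as a submodule of the ambient product. -/
def MhoSub : Submodule ℤ (MhoAmbient Mf H) where
  carrier := Mho Mf H
  add_mem' := by
    intro a b ha hb U h hh
    show Finsupp.mapDomain (Mf.con h U.1) (a U + b U).coeff
      = (a ⟨conjS h U.1, conjS_le U.2 hh⟩ + b ⟨conjS h U.1, conjS_le U.2 hh⟩).coeff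
    rw [MonoidAlgebra.coeff_add, MonoidAlgebra.coeff_add, Finsupp.mapDomain_add, ha U h hh, hb U h hh]
  zero_mem' := by
    intro U h hh
    show Finsupp.mapDomain (Mf.con h U.1) (0 : MonoidAlgebra ℤ (Mf.M U.1)).coeff
      = (0 : MonoidAlgebra ℤ (Mf.M (conjS h U.1))).coeff
    rw [MonoidAlgebra.coeff_zero, Finsupp.mapDomain_zero, MonoidAlgebra.coeff_zero]
  smul_mem' := by
    intro c a ha U h hh
    show Finsupp.mapDomain (Mf.con h U.1) (c • a U).coeff = (c • a ⟨conjS h U.1, conjS_le U.2 hh⟩).coeff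
    rw [MonoidAlgebra.coeff_smul, MonoidAlgebra.coeff_smul, Finsupp.mapDomain_smul, ha U h hh]

theorem mho_rep [Finite G] (hMf : ∀ K : Subgroup G, Finite (Mf.M K)) (R : Reps Mf H)
    {x : MhoAmbient Mf H} (hx : x ∈ Mho Mf H) :
    kappaM Mf R (fun k => (x ⟨k.1.1, R.subset k.1 k.2⟩).coeff k.1.2) = x := by
  funext U
  apply MonoidAlgebra.ext
  apply Finsupp.ext
  intro t
  rw [kappa_apply Mf hMf R _ U t]
  obtain ⟨r, hr, hdot⟩ := repOf_orb Mf R ⟨U.1, t⟩ U.2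
  exact mho_coeff_orb Mf hx hr hdot U.2
    (R.subset _ (repOf Mf R ⟨U.1, t⟩ U.2).2)

theorem kappa_finsum_eq [Finite G] (hMf : ∀ K : Subgroup G, Finite (Mf.M K)) (R : Reps Mf H)
    [Fintype ↥R.R] (x : ↥R.R → ℤ) : kappaM Mf R x = ∑ k : ↥R.R, x k • yVec Mf R k :=
  finsum_eq_sum_of_fintype _

theorem span_eq_mho [Finite G] (hMf : ∀ K : Subgroup G, Finite (Mf.M K)) (R : Reps Mf H) :
    (Submodule.span ℤ (Set.range (yVec Mf R)) : Set (MhoAmbient Mf H)) = Mho Mf H := by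
  haveI := finite_sig Mf hMf
  haveI : Fintype ↥R.R := Fintype.ofFinite _
  apply subset_antisymm
  · have hsub : Set.range (yVec Mf R) ⊆ Mho Mf H := by
      rintro _ ⟨k, rfl⟩
      have hy : yVec Mf R k = kappaM Mf R (fun j => if j = k then 1 else 0) := by
        rw [show kappaM Mf R (fun j => if j = k then (1:ℤ) else 0)
            = ∑ᶠ j : ↥R.R, (if j = k then (1:ℤ) else 0) • yVec Mf R j from rfl]
        rw [finsum_eq_single _ k (fun j hj => by rw [if_neg hj, zero_smul])]
        rw [if_pos rfl, one_smul]
      rw [hy]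
      exact kappa_mem_mho Mf hMf R _
    have : Submodule.span ℤ (Set.range (yVec Mf R)) ≤ MhoSub Mf :=
      Submodule.span_le.mpr hsub
    exact this
  · intro x hx
    rw [SetLike.mem_coe, ← mho_rep Mf hMf R hx, kappa_finsum_eq Mf hMf R]
    exact Submodule.sum_mem _ fun k _ =>
      Submodule.smul_mem _ _ (Submodule.subset_span ⟨k, rfl⟩)

theorem range_kappa_eq_mho [Finite G] (hMf : ∀ K : Subgroup G, Finite (Mf.M K)) (R : Reps Mf H) :
    Set.range (kappaM Mf R) = Mho Mf H := by
  apply subset_antisymm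
  · rintro _ ⟨c, rfl⟩
    exact kappa_mem_mho Mf hMf R c
  · intro x hx
    exact ⟨_, mho_rep Mf hMf R hx⟩

theorem yVec_linInd [Finite G] (hMf : ∀ K : Subgroup G, Finite (Mf.M K)) (R : Reps Mf H) :
    LinearIndependent ℤ (yVec Mf R) := by
  haveI := finite_sig Mf hMf
  haveI : Fintype ↥R.R := Fintype.ofFinite _
  rw [Fintype.linearIndependent_iff]
  intro g hg k
  have h1 : kappaM Mf R g = kappaM Mf R 0 := by
    rw [kappa_finsum_eq Mf hMf R, kappa_finsum_eq Mf hMf R, hg]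
    simp
  exact congrFun (kappa_inj Mf hMf R h1) k

/-- The predicate "`u` is obtained from `x` by restriction". -/
def PP (x u : Sig Mf) : Prop := ∃ hle : u.1 ≤ x.1, u.2 = Mf.res hle x.2

theorem PP_dot {g : G} {x u : Sig Mf} (h : PP Mf x u) : PP Mf (dot Mf g x) (dot Mf g u) := by
  obtain ⟨hle, ht⟩ := h
  refine ⟨conjS_mono g hle, ?_⟩
  show Mf.con g u.1 u.2 = Mf.res (conjS_mono g hle) (Mf.con g x.1 x.2)
  rw [ht, Mf.con_res]

theorem PP_dot_iff (g : G) {x u : Sig Mf} : PP Mf (dot Mf g x) (dot Mf g u) ↔ PP Mf x u := by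
  refine ⟨fun h => ?_, PP_dot Mf⟩
  have h2 := PP_dot Mf (g := g⁻¹) h
  rwa [dot_mul, dot_mul, inv_mul_cancel, dot_one, dot_one] at h2

theorem invCount_eq (x u : Sig Mf) :
    invCount Mf H x u = Nat.card {q : ↥H ⧸ x.1.subgroupOf H //
      ∃ h : ↥H, QuotientGroup.mk h = q ∧ PP Mf (dot Mf (h : G) x) u} := rfl

theorem dot_coset {x : Sig Mf} {h h' : ↥H}
    (hq : (QuotientGroup.mk h : ↥H ⧸ x.1.subgroupOf H) = QuotientGroup.mk h') :
    dot Mf (h' : G) x = dot Mf (h : G) x := by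
  rw [QuotientGroup.eq] at hq
  have hk : ((h⁻¹ * h' : ↥H) : G) ∈ x.1 := Subgroup.mem_subgroupOf.mp hq
  have e1 : (h' : G) = (h : G) * ((h⁻¹ * h' : ↥H) : G) := by push_cast; group
  rw [e1, ← dot_mul]
  congr 1
  exact Mf.con_id x.1 _ hk x.2

theorem Qcond_out (x u : Sig Mf) (q : ↥H ⧸ x.1.subgroupOf H) :
    (∃ h : ↥H, QuotientGroup.mk h = q ∧ PP Mf (dot Mf (h : G) x) u)
      ↔ PP Mf (dot Mf ((Quotient.out q : ↥H) : G) x) u := by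
  constructor
  · rintro ⟨h, hh, hp⟩
    rw [dot_coset Mf (show QuotientGroup.mk h
      = QuotientGroup.mk (Quotient.out q) from hh.trans (QuotientGroup.out_eq' q).symm)]
    exact hp
  · intro hp
    exact ⟨Quotient.out q, QuotientGroup.out_eq' q, hp⟩

theorem count_orb [Finite G] (x : Sig Mf) {u v : Sig Mf} {r : G} (hr : r ∈ H)
    (hdot : dot Mf r u = v) : invCount Mf H x u = invCount Mf H x v := by
  rw [invCount_eq, invCount_eq]
  apply Nat.card_congr
  refine Equiv.subtypeEquiv (MulAction.toPerm (⟨r, hr⟩ : ↥H)) (fun q => ?_)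
  constructor
  · rintro ⟨h, hh, hp⟩
    refine ⟨⟨r, hr⟩ * h, ?_, ?_⟩
    · show QuotientGroup.mk ((⟨r, hr⟩ : ↥H) * h) = (⟨r, hr⟩ : ↥H) • q
      rw [← hh, ← smul_eq_mul, MulAction.Quotient.smul_mk]
    · have e : (((⟨r, hr⟩ : ↥H) * h : ↥H) : G) = r * (h : G) := rfl
      rw [e, ← dot_mul, ← hdot]
      exact (PP_dot_iff Mf r).mpr hp
  · rintro ⟨h, hh, hp⟩
    refine ⟨(⟨r, hr⟩ : ↥H)⁻¹ * h, ?_, ?_⟩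
    · have hq : (MulAction.toPerm (⟨r, hr⟩ : ↥H)) q = (⟨r, hr⟩ : ↥H) • q := rfl
      rw [hq] at hh
      show QuotientGroup.mk ((⟨r, hr⟩ : ↥H)⁻¹ * h) = q
      rw [← smul_eq_mul, ← MulAction.Quotient.smul_mk, hh, inv_smul_smul]
    · have e : (((⟨r, hr⟩ : ↥H)⁻¹ * h : ↥H) : G) = r⁻¹ * (h : G) := rfl
      rw [e, ← dot_mul]
      rw [← PP_dot_iff Mf r, dot_mul, mul_inv_cancel, dot_one, hdot]
      exact hp

theorem cnt_eq_card {α : Type*} [Fintype α] (p : α → Prop) :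
    (∑ a : α, if p a then (1 : ℤ) else 0) = (Nat.card {a // p a} : ℤ) := by
  classical
  rw [Finset.sum_boole, Nat.card_eq_fintype_card, Fintype.card_subtype]

theorem inner2_apply (k : Sig Mf) (U : Subgroup G) (t : Mf.M U) (c : G) :
    (∑ᶠ hle : U ≤ conjS c k.1,
        MonoidAlgebra.single (Mf.res hle (Mf.con c k.1 k.2)) (1 : ℤ)).coeff t
      = if PP Mf (dot Mf c k) ⟨U, t⟩ then 1 else 0 := by
  by_cases hle : U ≤ conjS c k.1
  · haveI : Unique (PLift (U ≤ conjS c k.1)) := ⟨⟨⟨hle⟩⟩, fun _ => rfl⟩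
    haveI : Unique (U ≤ conjS c k.1) := ⟨⟨hle⟩, fun _ => rfl⟩
    rw [finsum_unique (fun hle : U ≤ conjS c k.1 =>
      MonoidAlgebra.single (Mf.res hle (Mf.con c k.1 k.2)) (1 : ℤ))]
    rw [MonoidAlgebra.single_apply]
    have hPP : PP Mf (dot Mf c k) ⟨U, t⟩
        ↔ Mf.res (Unique.instInhabited.default) (Mf.con c k.1 k.2) = t := by
      constructor
      · rintro ⟨h1, h2⟩
        exact h2.symm
      · intro h
        exact ⟨hle, h.symm⟩
    simp only [hPP]
  · haveI : IsEmpty (U ≤ conjS c k.1) := ⟨fun h => hle h⟩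
    rw [finsum_of_isEmpty]
    rw [if_neg (fun h => hle h.1)]
    rfl

theorem rho_apply [Finite G] (hMf : ∀ K : Subgroup G, Finite (Mf.M K)) (R : Reps Mf H)
    (f : ↥R.R → ℤ) (U : {U : Subgroup G // U ≤ H}) (t : Mf.M U.1) :
    (rhoM Mf R f U).coeff t = ∑ᶠ k : ↥R.R, f k * (invCount Mf H k.1 ⟨U.1, t⟩ : ℤ) := by
  haveI := finite_sig Mf hMf
  haveI : Fintype ↥R.R := Fintype.ofFinite _
  rw [show rhoM Mf R f U = ∑ᶠ k : ↥R.R, f k •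
      ∑ᶠ q : ↥H ⧸ k.1.1.subgroupOf H,
        ∑ᶠ hle : U.1 ≤ conjS ((Quotient.out q : ↥H) : G) k.1.1,
          MonoidAlgebra.single
            (Mf.res hle (Mf.con ((Quotient.out q : ↥H) : G) k.1.1 k.1.2)) (1 : ℤ) from rfl]
  rw [finsum_eq_sum_of_fintype, finsum_eq_sum_of_fintype, MonoidAlgebra.coeff_sum, Finset.sum_apply']
  refine Finset.sum_congr rfl fun k _ => ?_
  rw [MonoidAlgebra.coeff_smul, Finsupp.smul_apply, smul_eq_mul]
  congr 1
  haveI : Fintype (↥H ⧸ k.1.1.subgroupOf H) := Fintype.ofFinite _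
  rw [finsum_eq_sum_of_fintype, MonoidAlgebra.coeff_sum, Finset.sum_apply']
  refine Eq.trans (Finset.sum_congr rfl
    (fun q _ => inner2_apply Mf k.1 U.1 t ((Quotient.out q : ↥H) : G))) ?_
  rw [cnt_eq_card, invCount_eq]
  exact congrArg _ (Nat.card_congr (Equiv.subtypeEquivRight
    fun q => (Qcond_out Mf k.1 ⟨U.1, t⟩ q))).symm

theorem kappa_phi [Finite G] (hMf : ∀ K : Subgroup G, Finite (Mf.M K)) (R : Reps Mf H)
    (f : ↥R.R → ℤ) : kappaM Mf R (phiM Mf R f) = rhoM Mf R f := by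
  haveI := finite_sig Mf hMf
  funext U
  apply MonoidAlgebra.ext
  apply Finsupp.ext
  intro t
  rw [kappa_apply Mf hMf R _ U t, rho_apply Mf hMf R f U t]
  rw [show phiM Mf R f (repOf Mf R ⟨U.1, t⟩ U.2)
      = ∑ᶠ k : ↥R.R, f k * (invCount Mf H k.1 (repOf Mf R ⟨U.1, t⟩ U.2).1 : ℤ) from rfl]
  apply finsum_congr
  intro k
  obtain ⟨r, hr, hdot⟩ := repOf_orb Mf R ⟨U.1, t⟩ U.2
  rw [count_orb Mf k.1 hr hdot]

theorem card_conjS (g : G) (K : Subgroup G) : Nat.card (conjS g K) = Nat.card K :=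
  (Nat.card_congr (Subgroup.equivMapOfInjective K (MulAut.conj g).toMonoidHom
    (MulAut.conj g).injective).toEquiv).symm

theorem PP_eq_of_card [Finite G] {x u : Sig Mf} (h : PP Mf x u)
    (hc : Nat.card x.1 ≤ Nat.card u.1) : u = x := by
  obtain ⟨hle, ht⟩ := h
  obtain ⟨U1, u2⟩ := u
  have h1 : U1 = x.1 := by
    have hsub : (U1 : Set G) ⊆ (x.1 : Set G) := hle
    have hcard : (x.1 : Set G).ncard ≤ (U1 : Set G).ncard := by
      rw [← Nat.card_coe_set_eq, ← Nat.card_coe_set_eq]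
      exact hc
    exact SetLike.coe_injective (Set.eq_of_subset_of_ncard_le hsub hcard (Set.toFinite _))
  subst h1
  dsimp only at ht hle
  rw [ht]
  show (⟨x.1, Mf.res hle x.2⟩ : Sig Mf) = ⟨x.1, x.2⟩
  exact congrArg (Sigma.mk x.1) (Mf.res_self x.1 x.2)

theorem invCount_self_pos [Finite G] (u : Sig Mf) : 0 < invCount Mf H u u := by
  rw [invCount_eq]
  have hne : Nonempty {q : ↥H ⧸ u.1.subgroupOf H //
      ∃ h : ↥H, QuotientGroup.mk h = q ∧ PP Mf (dot Mf (h : G) u) u} := by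
    refine ⟨⟨QuotientGroup.mk 1, 1, rfl, ?_⟩⟩
    rw [show ((1 : ↥H) : G) = (1 : G) from rfl, dot_one]
    exact ⟨le_rfl, (Mf.res_self u.1 u.2).symm⟩
  exact Nat.card_pos

theorem phi_apply_eq (R : Reps Mf H) [Fintype ↥R.R] (f : ↥R.R → ℤ) (u : ↥R.R) :
    phiM Mf R f u = ∑ k : ↥R.R, f k * (invCount Mf H k.1 u.1 : ℤ) := by
  rw [show phiM Mf R f u = ∑ᶠ k : ↥R.R, f k * (invCount Mf H k.1 u.1 : ℤ) from rfl,
    finsum_eq_sum_of_fintype]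

theorem phi_inj [Finite G] (hMf : ∀ K : Subgroup G, Finite (Mf.M K)) (R : Reps Mf H) :
    Function.Injective (phiM Mf R) := by
  haveI := finite_sig Mf hMf
  haveI : Fintype ↥R.R := Fintype.ofFinite _
  intro f g hfg
  by_contra hne
  have hd : ∃ k, f k - g k ≠ 0 := by
    by_contra hall
    push_neg at hall
    exact hne (funext fun k => sub_eq_zero.mp (hall k))
  set d : ↥R.R → ℤ := fun k => f k - g k with hddef
  have hzero : ∀ u : ↥R.R, ∑ k : ↥R.R, d k * (invCount Mf H k.1 u.1 : ℤ) = 0 := by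
    intro u
    have h1 : phiM Mf R f u = phiM Mf R g u := congrFun hfg u
    rw [phi_apply_eq Mf R f u, phi_apply_eq Mf R g u] at h1
    calc ∑ k : ↥R.R, d k * (invCount Mf H k.1 u.1 : ℤ)
        = ∑ k : ↥R.R, (f k * (invCount Mf H k.1 u.1 : ℤ)
            - g k * (invCount Mf H k.1 u.1 : ℤ)) :=
          Finset.sum_congr rfl fun k _ => sub_mul _ _ _
      _ = ∑ k : ↥R.R, f k * (invCount Mf H k.1 u.1 : ℤ)
            - ∑ k : ↥R.R, g k * (invCount Mf H k.1 u.1 : ℤ) := Finset.sum_sub_distrib ..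
      _ = 0 := by rw [h1, sub_self]
  obtain ⟨k0, hk0⟩ := hd
  obtain ⟨u, hu_mem, hu_max⟩ := Finset.exists_max_image
    (Finset.univ.filter (fun k : ↥R.R => d k ≠ 0)) (fun k => Nat.card k.1.1)
    ⟨k0, Finset.mem_filter.mpr ⟨Finset.mem_univ _, hk0⟩⟩
  have hdu : d u ≠ 0 := (Finset.mem_filter.mp hu_mem).2
  have hz := hzero u
  rw [Finset.sum_eq_single u ?_ (fun hn => absurd (Finset.mem_univ u) hn)] at hz
  · rcases mul_eq_zero.mp hz with hcase | hcase
    · exact hdu hcase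
    · have hpos := invCount_self_pos Mf (H := H) u.1
      rw [Int.natCast_eq_zero] at hcase
      omega
  · intro k _ hku
    by_cases hdk : d k = 0
    · rw [hdk, zero_mul]
    · have hinv : invCount Mf H k.1 u.1 = 0 := by
        by_contra h0
        have hne' : Nonempty {q : ↥H ⧸ k.1.1.subgroupOf H //
            ∃ h : ↥H, QuotientGroup.mk h = q ∧ PP Mf (dot Mf (h : G) k.1) u.1} := by
          rw [invCount_eq] at h0
          exact (Nat.card_ne_zero.mp h0).1
        obtain ⟨⟨q, h2, hq2, hp⟩⟩ := hne'
        have hcard2 : Nat.card k.1.1 ≤ Nat.card u.1.1 :=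
          hu_max k (Finset.mem_filter.mpr ⟨Finset.mem_univ _, hdk⟩)
        have hEq : u.1 = dot Mf (h2 : G) k.1 := by
          refine PP_eq_of_card Mf hp ?_
          rw [show Nat.card (dot Mf (h2 : G) k.1).1
            = Nat.card (conjS (h2 : G) k.1.1) from rfl, card_conjS]
          exact hcard2
        have horb : orb Mf H k.1 u.1 := ⟨(h2 : G), h2.2, hEq.symm⟩
        exact hku (rep_unique Mf horb)
      rw [hinv]
      simp
/-- (i) The elements `(y_L^{(K,s)})_{L ≤ H}`, `(K,s) ∈ R(H,M)`, form
a free `ℤ`-basis of `℧(H,M)`, and `κ_H : Ω̃(H,M) → ℧(H,M)` is an isomorphism;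
(ii) `κ_H ∘ φ_H = ρ_H`; (iii) `φ_H` and `ρ_H` are injective. -/
theorem kappa_basis_and_mark [Finite G] (hMf : ∀ K : Subgroup G, Finite (Mf.M K))
    (R : Reps Mf H) :
    (LinearIndependent ℤ (yVec Mf R) ∧
      (Submodule.span ℤ (Set.range (yVec Mf R)) : Set (MhoAmbient Mf H)) = Mho Mf H) ∧
    (Function.Injective (kappaM Mf R) ∧ Set.range (kappaM Mf R) = Mho Mf H) ∧
    (∀ f : ↥R.R → ℤ, kappaM Mf R (phiM Mf R f) = rhoM Mf R f) ∧
    Function.Injective (phiM Mf R) ∧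
    Function.Injective (rhoM Mf R) := by
  refine ⟨⟨yVec_linInd Mf hMf R, span_eq_mho Mf hMf R⟩,
    ⟨kappa_inj Mf hMf R, range_kappa_eq_mho Mf hMf R⟩,
    kappa_phi Mf hMf R, phi_inj Mf hMf R, ?_⟩
  intro f g hfg
  have h1 : kappaM Mf R (phiM Mf R f) = kappaM Mf R (phiM Mf R g) := by
    rw [kappa_phi Mf hMf R, kappa_phi Mf hMf R, hfg]
  exact phi_inj Mf hMf R (kappa_inj Mf hMf R h1)

end
end LB
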